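/- The distance-to-measure function is 1-Lipschitz: for any probability measure P on R^d, any m ∈ (0,1), and any x, x' ∈ R^d, |δ_{P,m}(x) − δ_{P,m}(x')| ≤ ||x − x'||. -/

import Mathlib

open MeasureTheory Set

noncomputable def distCdf {d : ℕ} (P : Measure (EuclideanSpace ℝ (Fin d)))
    (x : EuclideanSpace ℝ (Fin d)) (t : ℝ) : ℝ :=
  (P {y | ‖y - x‖ ≤ t}).toReal

noncomputable def sqDistCdf {d : ℕ} (P : Measure (EuclideanSpace ℝ (Fin d)))
    (x : EuclideanSpace ℝ (Fin d)) (t : ℝ) : ℝ :=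
  (P {y | ‖y - x‖ ^ 2 ≤ t}).toReal

noncomputable def quantile (F : ℝ → ℝ) (u : ℝ) : ℝ :=
  sInf {t : ℝ | u ≤ F t}

/-- The squared distance-to-measure at resolution `m`:
`δ_{P,m}(x)² = (1/m) ∫_0^m F_x^{-1}(u) du`. -/
noncomputable def dtmSq {d : ℕ} (P : Measure (EuclideanSpace ℝ (Fin d))) (m : ℝ)
    (x : EuclideanSpace ℝ (Fin d)) : ℝ :=
  (1 / m) * ∫ u in Set.Ioo (0 : ℝ) m, quantile (sqDistCdf P x) u

/-- The distance-to-measure at resolution `m`. -/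
noncomputable def dtm {d : ℕ} (P : Measure (EuclideanSpace ℝ (Fin d))) (m : ℝ)
    (x : EuclideanSpace ℝ (Fin d)) : ℝ :=
  Real.sqrt (dtmSq P m x)

set_option linter.unusedSectionVars false

section Aux

variable {d : ℕ} (P : Measure (EuclideanSpace ℝ (Fin d))) [IsProbabilityMeasure P]

lemma sqDistCdf_nonneg (z : EuclideanSpace ℝ (Fin d)) (t : ℝ) : 0 ≤ sqDistCdf P z t :=
  ENNReal.toReal_nonneg

/-- The quantile set is nonempty for `u < 1`. -/
lemma quantileSet_nonempty (z : EuclideanSpace ℝ (Fin d)) {u : ℝ} (hu : u < 1) :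
    {t : ℝ | u ≤ sqDistCdf P z t}.Nonempty := by
  set s : ℕ → Set (EuclideanSpace ℝ (Fin d)) := fun n => {y | ‖y - z‖ ^ 2 ≤ (n : ℝ)} with hs
  have hmono : Monotone s := by
    intro a b hab y hy
    simp only [hs, mem_setOf_eq] at hy ⊢
    exact hy.trans (by exact_mod_cast hab)
  have hunion : (⋃ n, s n) = univ := by
    ext y
    simp only [hs, mem_iUnion, mem_setOf_eq, mem_univ, iff_true]
    exact exists_nat_ge (‖y - z‖ ^ 2)
  have htend : Filter.Tendsto (P ∘ s) Filter.atTop (nhds (P (⋃ n, s n))) :=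
    tendsto_measure_iUnion_atTop hmono
  rw [hunion, measure_univ] at htend
  have hlt : ENNReal.ofReal u < 1 := ENNReal.ofReal_lt_one.mpr hu
  have hev : ∀ᶠ n in Filter.atTop, ENNReal.ofReal u < (P ∘ s) n :=
    htend.eventually (eventually_gt_nhds hlt)
  obtain ⟨n, hn⟩ := hev.exists
  exact ⟨(n : ℝ), (ENNReal.ofReal_le_iff_le_toReal (measure_ne_top P (s n))).mp hn.le⟩

/-- Elements of the quantile set are nonnegative when `u > 0`. -/
lemma quantileSet_nonneg (z : EuclideanSpace ℝ (Fin d)) {u : ℝ} (hu : 0 < u) :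
    ∀ t ∈ {t : ℝ | u ≤ sqDistCdf P z t}, (0 : ℝ) ≤ t := by
  intro t ht
  by_contra h
  push_neg at h
  have hem : {y : EuclideanSpace ℝ (Fin d) | ‖y - z‖ ^ 2 ≤ t} = ∅ := by
    ext y
    simp only [mem_setOf_eq, mem_empty_iff_false, iff_false, not_le]
    nlinarith [sq_nonneg (‖y - z‖)]
  have h0 : sqDistCdf P z t = 0 := by
    rw [sqDistCdf, hem, measure_empty]; simp
  rw [mem_setOf_eq, h0] at ht
  linarith

lemma quantile_nonneg' (z : EuclideanSpace ℝ (Fin d)) {u : ℝ} (hu0 : 0 < u) (hu1 : u < 1) :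
    0 ≤ quantile (sqDistCdf P z) u :=
  le_csInf (quantileSet_nonempty P z hu1) (quantileSet_nonneg P z hu0)

lemma quantile_le_of_mem (z : EuclideanSpace ℝ (Fin d)) {u t : ℝ} (hu : 0 < u)
    (ht : u ≤ sqDistCdf P z t) : quantile (sqDistCdf P z) u ≤ t :=
  csInf_le ⟨0, quantileSet_nonneg P z hu⟩ ht

lemma quantile_monotoneOn (z : EuclideanSpace ℝ (Fin d)) {m : ℝ} (hm1 : m < 1) :
    MonotoneOn (fun u => quantile (sqDistCdf P z) u) (Icc 0 m) := by
  intro u hu v hv huv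
  dsimp only
  rcases eq_or_lt_of_le hu.1 with h0 | h0
  · -- u = 0
    rcases eq_or_lt_of_le (h0 ▸ huv : (0:ℝ) ≤ v) with h0' | h0'
    · rw [← h0, ← h0']
    · have hz : quantile (sqDistCdf P z) 0 = 0 := by
        have huniv : {t : ℝ | (0:ℝ) ≤ sqDistCdf P z t} = univ := by
          ext t; simp [sqDistCdf_nonneg P z t]
        rw [quantile, huniv]
        exact Real.sInf_of_not_bddBelow (by simpa using not_bddBelow_univ (α := ℝ))
      rw [← h0, hz]
      exact quantile_nonneg' P z h0' (lt_of_le_of_lt hv.2 hm1)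
  · -- 0 < u
    apply csInf_le_csInf ⟨0, quantileSet_nonneg P z h0⟩
      (quantileSet_nonempty P z (lt_of_le_of_lt hv.2 hm1))
    intro t ht
    exact le_trans huv ht

lemma quantile_integrableOn (z : EuclideanSpace ℝ (Fin d)) {m : ℝ} (hm0 : 0 < m) (hm1 : m < 1) :
    IntegrableOn (fun u => quantile (sqDistCdf P z) u) (Ioo 0 m) := by
  have h : IntegrableOn (fun u => quantile (sqDistCdf P z) u) (Icc 0 m) volume :=
    (quantile_monotoneOn P z hm1).integrableOn_of_measure_ne_top
      (isLeast_Icc hm0.le) (isGreatest_Icc hm0.le)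
      (by rw [Real.volume_Icc]; exact ENNReal.ofReal_ne_top) measurableSet_Icc
  exact h.mono_set Ioo_subset_Icc_self

lemma sqrt_quantile_integrableOn (z : EuclideanSpace ℝ (Fin d)) {m : ℝ}
    (hm0 : 0 < m) (hm1 : m < 1) :
    IntegrableOn (fun u => Real.sqrt (quantile (sqDistCdf P z) u)) (Ioo 0 m) := by
  have hmono : MonotoneOn (fun u => Real.sqrt (quantile (sqDistCdf P z) u)) (Icc 0 m) :=
    fun u hu v hv huv => Real.sqrt_le_sqrt (quantile_monotoneOn P z hm1 hu hv huv)
  have h : IntegrableOn (fun u => Real.sqrt (quantile (sqDistCdf P z) u)) (Icc 0 m) volume :=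
    hmono.integrableOn_of_measure_ne_top
      (isLeast_Icc hm0.le) (isGreatest_Icc hm0.le)
      (by rw [Real.volume_Icc]; exact ENNReal.ofReal_ne_top) measurableSet_Icc
  exact h.mono_set Ioo_subset_Icc_self

/-- Key pointwise bound: the quantile at `x` is at most `(√(quantile at x') + ‖x-x'‖)²`. -/
lemma quantile_pointwise_bound (x x' : EuclideanSpace ℝ (Fin d)) {u : ℝ}
    (hu0 : 0 < u) (hu1 : u < 1) :
    quantile (sqDistCdf P x) u ≤
      (Real.sqrt (quantile (sqDistCdf P x') u) + ‖x - x'‖) ^ 2 := by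
  set c : ℝ := ‖x - x'‖ with hc
  have hc0 : 0 ≤ c := norm_nonneg _
  set q : ℝ := quantile (sqDistCdf P x') u with hq
  have hq0 : 0 ≤ q := quantile_nonneg' P x' hu0 hu1
  -- For every ε > 0, quantile x u ≤ (√(q+ε)+c)²
  have key : ∀ ε > (0:ℝ), quantile (sqDistCdf P x) u ≤ (Real.sqrt (q + ε) + c) ^ 2 := by
    intro ε hε
    have hne : {t : ℝ | u ≤ sqDistCdf P x' t}.Nonempty := quantileSet_nonempty P x' hu1
    obtain ⟨t, ht, htlt⟩ := exists_lt_of_csInf_lt hne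
      (lt_add_of_pos_right (sInf {t : ℝ | u ≤ sqDistCdf P x' t}) hε)
    have htq : t < q + ε := htlt
    have ht0 : 0 ≤ t := quantileSet_nonneg P x' hu0 t ht
    -- set inclusion
    have hsub : {y : EuclideanSpace ℝ (Fin d) | ‖y - x'‖ ^ 2 ≤ t} ⊆
        {y : EuclideanSpace ℝ (Fin d) | ‖y - x‖ ^ 2 ≤ (Real.sqrt t + c) ^ 2} := by
      intro y hy
      simp only [mem_setOf_eq] at hy ⊢
      have h1 : ‖y - x'‖ ≤ Real.sqrt t := (Real.le_sqrt (norm_nonneg _) ht0).mpr hy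
      have h2 : ‖y - x‖ ≤ ‖y - x'‖ + c := by
        calc ‖y - x‖ ≤ ‖y - x'‖ + ‖x' - x‖ := norm_sub_le_norm_sub_add_norm_sub y x' x
          _ = ‖y - x'‖ + c := by rw [hc, norm_sub_rev x x']
      have h3 : ‖y - x‖ ≤ Real.sqrt t + c := by linarith
      exact pow_le_pow_left₀ (norm_nonneg _) h3 2
    have hFx : u ≤ sqDistCdf P x ((Real.sqrt t + c) ^ 2) :=
      le_trans ht (ENNReal.toReal_mono (measure_ne_top P _) (measure_mono hsub))
    have h4 : quantile (sqDistCdf P x) u ≤ (Real.sqrt t + c) ^ 2 :=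
      quantile_le_of_mem P x hu0 hFx
    refine le_trans h4 ?_
    have h5 : Real.sqrt t ≤ Real.sqrt (q + ε) := Real.sqrt_le_sqrt htq.le
    nlinarith [Real.sqrt_nonneg (q + ε), Real.sqrt_nonneg t]
  -- take ε → 0⁺
  have htends : Filter.Tendsto (fun ε : ℝ => (Real.sqrt (q + ε) + c) ^ 2)
      (nhdsWithin 0 (Ioi 0)) (nhds ((Real.sqrt q + c) ^ 2)) := by
    have h : Filter.Tendsto (fun ε : ℝ => (Real.sqrt (q + ε) + c) ^ 2) (nhds 0)
        (nhds ((Real.sqrt (q + 0) + c) ^ 2)) := by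
      apply Continuous.tendsto
      continuity
    rw [add_zero] at h
    exact h.mono_left nhdsWithin_le_nhds
  refine ge_of_tendsto htends ?_
  filter_upwards [self_mem_nhdsWithin] with ε hε
  exact key ε hε

/-- One-sided Lipschitz bound. -/
lemma dtm_le_add (m : ℝ) (hm : m ∈ Set.Ioo (0:ℝ) 1) (x x' : EuclideanSpace ℝ (Fin d)) :
    dtm P m x ≤ dtm P m x' + ‖x - x'‖ := by
  obtain ⟨hm0, hm1⟩ := hm
  set c : ℝ := ‖x - x'‖ with hc
  have hc0 : 0 ≤ c := norm_nonneg _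
  set Q : ℝ → ℝ := fun u => quantile (sqDistCdf P x) u with hQ
  set Q' : ℝ → ℝ := fun u => quantile (sqDistCdf P x') u with hQ'
  set I : ℝ := ∫ u in Ioo (0:ℝ) m, Q' u with hI
  set J : ℝ := ∫ u in Ioo (0:ℝ) m, Q u with hJ
  set T : ℝ := ∫ u in Ioo (0:ℝ) m, Real.sqrt (Q' u) with hT
  have hQ'int : IntegrableOn Q' (Ioo 0 m) := quantile_integrableOn P x' hm0 hm1
  have hQint : IntegrableOn Q (Ioo 0 m) := quantile_integrableOn P x hm0 hm1
  have hSint : IntegrableOn (fun u => Real.sqrt (Q' u)) (Ioo 0 m) :=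
    sqrt_quantile_integrableOn P x' hm0 hm1
  have hconst : ∀ r : ℝ, IntegrableOn (fun _ => r) (Ioo (0:ℝ) m) volume :=
    fun r => integrableOn_const measure_Ioo_lt_top.ne
  have hQ'nn : ∀ u ∈ Ioo (0:ℝ) m, 0 ≤ Q' u := fun u hu =>
    quantile_nonneg' P x' hu.1 (hu.2.trans hm1)
  have hInn : 0 ≤ I := setIntegral_nonneg measurableSet_Ioo hQ'nn
  have hvol : (volume (Ioo (0:ℝ) m)).toReal = m := by
    rw [Real.volume_Ioo, sub_zero, ENNReal.toReal_ofReal hm0.le]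
  have hconstInt : ∀ r : ℝ, (∫ u in Ioo (0:ℝ) m, r) = m * r := fun r => by
    rw [setIntegral_const, measureReal_def, hvol, smul_eq_mul]
  -- J ≤ I + 2cT + c²m
  have hJle : J ≤ I + 2 * c * T + c ^ 2 * m := by
    have hMint : IntegrableOn (fun u => 2 * c * Real.sqrt (Q' u)) (Ioo (0:ℝ) m) volume :=
      hSint.const_mul (2 * c)
    have hGint : IntegrableOn (fun u => Q' u + 2 * c * Real.sqrt (Q' u) + c ^ 2)
        (Ioo (0:ℝ) m) volume := (hQ'int.add hMint).add (hconst (c ^ 2))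
    have hmono : J ≤ ∫ u in Ioo (0:ℝ) m, (Q' u + 2 * c * Real.sqrt (Q' u) + c ^ 2) := by
      apply setIntegral_mono_on hQint hGint measurableSet_Ioo
      intro u hu
      have hb := quantile_pointwise_bound P x x' hu.1 (hu.2.trans hm1)
      have hs := Real.sq_sqrt (hQ'nn u hu)
      nlinarith [Real.sqrt_nonneg (Q' u)]
    have e1 : ∫ u in Ioo (0:ℝ) m, (Q' u + 2 * c * Real.sqrt (Q' u) + c ^ 2)
        = (∫ u in Ioo (0:ℝ) m, (Q' u + 2 * c * Real.sqrt (Q' u)))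
          + ∫ u in Ioo (0:ℝ) m, (c ^ 2 : ℝ) := integral_add (hQ'int.add hMint) (hconst (c ^ 2))
    have e2 : (∫ u in Ioo (0:ℝ) m, (Q' u + 2 * c * Real.sqrt (Q' u)))
        = I + ∫ u in Ioo (0:ℝ) m, 2 * c * Real.sqrt (Q' u) := integral_add hQ'int hMint
    have e3 : (∫ u in Ioo (0:ℝ) m, 2 * c * Real.sqrt (Q' u)) = 2 * c * T :=
      integral_const_mul (2 * c) _
    rw [e1, e2, e3, hconstInt (c ^ 2)] at hmono
    linarith
  -- Cauchy–Schwarz: T ≤ √m √I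
  have hTle : T ≤ Real.sqrt m * Real.sqrt I := by
    rcases eq_or_lt_of_le hInn with h0 | h0
    · -- I = 0 : Q' = 0 a.e., so T = 0
      have hae : ∀ᵐ u ∂(volume.restrict (Ioo (0:ℝ) m)), 0 ≤ Q' u :=
        (ae_restrict_iff' measurableSet_Ioo).mpr (Filter.Eventually.of_forall hQ'nn)
      have hz : Q' =ᵐ[volume.restrict (Ioo (0:ℝ) m)] 0 :=
        (integral_eq_zero_iff_of_nonneg_ae hae hQ'int).mp h0.symm
      have hz' : (fun u => Real.sqrt (Q' u)) =ᵐ[volume.restrict (Ioo (0:ℝ) m)] 0 := by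
        filter_upwards [hz] with u hu
        simp only [Pi.zero_apply] at hu ⊢
        rw [hu, Real.sqrt_zero]
      have hT0 : T = 0 := by rw [hT, integral_congr_ae hz']; simp
      rw [hT0]
      positivity
    · set lam : ℝ := Real.sqrt (I / m) with hlam
      have hlampos : 0 < lam := Real.sqrt_pos.mpr (div_pos h0 hm0)
      -- pointwise AM-GM: √(Q' u) ≤ (Q' u / lam + lam)/2
      have hpt : ∀ u ∈ Ioo (0:ℝ) m, Real.sqrt (Q' u) ≤ (Q' u / lam + lam) / 2 := by
        intro u hu
        have hs := Real.sq_sqrt (hQ'nn u hu)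
        rw [le_div_iff₀ (show (0:ℝ) < 2 by norm_num), div_add' _ _ _ hlampos.ne',
          le_div_iff₀ hlampos]
        nlinarith [sq_nonneg (Real.sqrt (Q' u) - lam)]
      have h2int : IntegrableOn (fun u => (Q' u / lam + lam) / 2) (Ioo 0 m) :=
        ((hQ'int.div_const lam).add (hconst lam)).div_const 2
      have hTle' : T ≤ ∫ u in Ioo (0:ℝ) m, (Q' u / lam + lam) / 2 :=
        setIntegral_mono_on hSint h2int measurableSet_Ioo hpt
      have eA : (∫ u in Ioo (0:ℝ) m, Q' u / lam) = I / lam := integral_div lam _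
      have eC : (∫ u in Ioo (0:ℝ) m, (Q' u / lam + lam)) = I / lam + m * lam := by
        rw [integral_add (hQ'int.div_const lam) (hconst lam), eA, hconstInt lam]
      have eD : (∫ u in Ioo (0:ℝ) m, (Q' u / lam + lam) / 2) = (I / lam + m * lam) / 2 := by
        rw [integral_div, eC]
      have hval : (I / lam + m * lam) / 2 = Real.sqrt m * Real.sqrt I := by
        have h1 : lam = Real.sqrt I / Real.sqrt m := by
          rw [hlam, Real.sqrt_div hInn m]
        have hsm : 0 < Real.sqrt m := Real.sqrt_pos.mpr hm0
        have hsI : 0 < Real.sqrt I := Real.sqrt_pos.mpr h0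
        have hII : Real.sqrt I * Real.sqrt I = I := Real.mul_self_sqrt hInn
        have hmm : Real.sqrt m * Real.sqrt m = m := Real.mul_self_sqrt hm0.le
        rw [h1]
        field_simp
        nlinarith [hII, hmm, hsm, hsI]
      rw [eD] at hTle'
      linarith [hval ▸ hTle']
  -- Put it together
  have hdtmSq' : dtmSq P m x' = (1/m) * I := rfl
  have hdtmSqx : dtmSq P m x = (1/m) * J := rfl
  set B : ℝ := dtm P m x' with hB
  have hB0 : 0 ≤ B := Real.sqrt_nonneg _
  have hB2 : B ^ 2 = (1/m) * I := by
    have hd0 : 0 ≤ dtmSq P m x' := by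
      rw [hdtmSq']; exact mul_nonneg (by positivity) hInn
    rw [hB, dtm, Real.sq_sqrt hd0, hdtmSq']
  have hsqrtmI : Real.sqrt m * Real.sqrt I = m * B := by
    have h1 : m * I = m ^ 2 * ((1/m) * I) := by field_simp
    rw [← Real.sqrt_mul hm0.le, h1, Real.sqrt_mul (sq_nonneg m), Real.sqrt_sq hm0.le, hB, dtm,
      hdtmSq']
  have hfinal : dtmSq P m x ≤ (B + c) ^ 2 := by
    rw [hdtmSqx]
    have hTc : 2 * c * T ≤ 2 * c * (Real.sqrt m * Real.sqrt I) :=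
      mul_le_mul_of_nonneg_left hTle (by positivity)
    have hJ2 : J ≤ I + 2 * c * (m * B) + c ^ 2 * m := by
      rw [← hsqrtmI]; linarith
    have hIB : I = m * B ^ 2 := by rw [hB2]; field_simp
    calc (1/m) * J ≤ (1/m) * (I + 2 * c * (m * B) + c ^ 2 * m) :=
          mul_le_mul_of_nonneg_left hJ2 (by positivity)
      _ = (B + c) ^ 2 := by rw [hIB]; field_simp; ring
  calc dtm P m x = Real.sqrt (dtmSq P m x) := rfl
    _ ≤ Real.sqrt ((B + c) ^ 2) := Real.sqrt_le_sqrt hfinal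
    _ = B + c := Real.sqrt_sq (by positivity)

end Aux

/-- the distance-to-measure is 1-Lipschitz:
`|δ_{P,m}(x) − δ_{P,m}(x')| ≤ ‖x − x'‖`. -/
theorem dtm_lipschitz {d : ℕ}
    (P : Measure (EuclideanSpace ℝ (Fin d))) [IsProbabilityMeasure P]
    (m : ℝ) (hm : m ∈ Set.Ioo (0 : ℝ) 1) (x x' : EuclideanSpace ℝ (Fin d)) :
    |dtm P m x - dtm P m x'| ≤ ‖x - x'‖ := by
  rw [abs_sub_le_iff]
  constructor
  · linarith [dtm_le_add P m hm x x']
  · have h := dtm_le_add P m hm x' x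
    rw [norm_sub_rev] at h
    linarith
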